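/- Let x_1, …, x_n ∈ ℝ^d be unit vectors, let b : ℕ → ℝ satisfy b_k ≥ 0 and Σ_{k=0}^∞ b_k < ∞, and suppose the matrix H with H_{ab} = Σ_k b_k (x_a·x_b)^k is positive definite. Let (a_k)_{k∈ℕ} be real coefficients and (β_k)_{k∈ℕ} vectors in ℝ^d, with b_k > 0 whenever a_k ≠ 0, and suppose S := Σ_{k=0}^∞ b_k^{−1/2} |a_k| ‖β_k‖^k < ∞. Define y ∈ ℝⁿ by y_a = Σ_{k=0}^∞ a_k (β_k · x_a)^k (the series converges absolutely). Then √(yᵀ H⁻¹ y) ≤ S. -/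

import Mathlib

open Matrix
open scoped RealInnerProductSpace

lemma inner_pow_eq (d k : ℕ) (u w : EuclideanSpace ℝ (Fin d)) :
    ⟪u, w⟫ ^ k = ∑ p : Fin k → Fin d, (∏ i, u (p i)) * (∏ i, w (p i)) := by
  have h : ⟪u, w⟫ = ∑ j, u j * w j := by
    simp [PiLp.inner_apply, RCLike.inner_apply, conj_trivial, mul_comm]
  rw [h, Fintype.sum_pow]
  exact Finset.sum_congr rfl fun p _ => by rw [← Finset.prod_mul_distrib]

lemma key_cs (n d k : ℕ) (x : Fin n → EuclideanSpace ℝ (Fin d))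
    (β : EuclideanSpace ℝ (Fin d)) (v : Fin n → ℝ) :
    (∑ e, v e * ⟪β, x e⟫ ^ k) ^ 2 ≤ (‖β‖ ^ k) ^ 2 * ∑ e, ∑ f, v e * v f * ⟪x e, x f⟫ ^ k ∧
    0 ≤ ∑ e, ∑ f, v e * v f * ⟪x e, x f⟫ ^ k := by
  classical
  set F : EuclideanSpace ℝ (Fin d) → (Fin k → Fin d) → ℝ := fun u p => ∏ i, u (p i) with hF
  set G : (Fin k → Fin d) → ℝ := fun p => ∑ e, v e * F (x e) p with hG
  have h1 : ∀ p, G p ^ 2 = ∑ e, ∑ f, v e * v f * (F (x e) p * F (x f) p) := by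
    intro p
    rw [sq, hG]
    simp only
    rw [Finset.sum_mul_sum]
    exact Finset.sum_congr rfl fun e _ => Finset.sum_congr rfl fun f _ => by ring
  have hP : ∑ e, ∑ f, v e * v f * ⟪x e, x f⟫ ^ k = ∑ p, G p ^ 2 := by
    calc ∑ e, ∑ f, v e * v f * ⟪x e, x f⟫ ^ k
        = ∑ e, ∑ f, ∑ p, v e * v f * (F (x e) p * F (x f) p) := by
          simp_rw [inner_pow_eq, Finset.mul_sum]
          rfl
      _ = ∑ e, ∑ p, ∑ f, v e * v f * (F (x e) p * F (x f) p) :=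
          Finset.sum_congr rfl fun e _ => Finset.sum_comm
      _ = ∑ p, ∑ e, ∑ f, v e * v f * (F (x e) p * F (x f) p) := Finset.sum_comm
      _ = ∑ p, G p ^ 2 := by simp_rw [h1]
  have hE : ∑ e, v e * ⟪β, x e⟫ ^ k = ∑ p, F β p * G p := by
    calc ∑ e, v e * ⟪β, x e⟫ ^ k
        = ∑ e, ∑ p, v e * (F β p * F (x e) p) := by
          simp_rw [inner_pow_eq, Finset.mul_sum]
          rfl
      _ = ∑ p, ∑ e, v e * (F β p * F (x e) p) := Finset.sum_comm
      _ = ∑ p, F β p * G p := by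
          refine Finset.sum_congr rfl fun p _ => ?_
          rw [hG]; simp only; rw [Finset.mul_sum]
          exact Finset.sum_congr rfl fun e _ => by ring
  have hB : ∑ p, F β p ^ 2 = (‖β‖ ^ k) ^ 2 := by
    have := inner_pow_eq d k β β
    rw [real_inner_self_eq_norm_sq] at this
    simp_rw [sq]
    rw [← this]
    ring
  constructor
  · rw [hE, hP]
    calc (∑ p, F β p * G p) ^ 2 ≤ (∑ p, F β p ^ 2) * ∑ p, G p ^ 2 :=
        Finset.sum_mul_sq_le_sq_mul_sq _ _ _
      _ = (‖β‖ ^ k) ^ 2 * ∑ p, G p ^ 2 := by rw [hB]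
  · rw [hP]
    exact Finset.sum_nonneg fun p _ => sq_nonneg _

theorem stmt4 (n d : ℕ) (x : Fin n → EuclideanSpace ℝ (Fin d))
    (hx : ∀ a, ‖x a‖ = 1)
    (b : ℕ → ℝ) (hb_nonneg : ∀ k, 0 ≤ b k) (hb_sum : Summable b)
    (H : Matrix (Fin n) (Fin n) ℝ)
    (hH : ∀ a c, H a c = ∑' k : ℕ, b k * ⟪x a, x c⟫ ^ k)
    (hHpd : H.PosDef)
    (a : ℕ → ℝ) (β : ℕ → EuclideanSpace ℝ (Fin d))
    (hab : ∀ k, a k ≠ 0 → 0 < b k)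
    (hS : Summable (fun k : ℕ => (Real.sqrt (b k))⁻¹ * |a k| * ‖β k‖ ^ k))
    (y : Fin n → ℝ) (hy : ∀ c, y c = ∑' k : ℕ, a k * ⟪β k, x c⟫ ^ k) :
    Real.sqrt (y ⬝ᵥ (H⁻¹ *ᵥ y)) ≤
      ∑' k : ℕ, (Real.sqrt (b k))⁻¹ * |a k| * ‖β k‖ ^ k := by
  classical
  set c : ℕ → ℝ := fun k => (Real.sqrt (b k))⁻¹ * |a k| * ‖β k‖ ^ k with hcdef
  have hc_nonneg : ∀ k, 0 ≤ c k := fun k => by positivity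
  have hS0 : (0:ℝ) ≤ ∑' k, c k := tsum_nonneg hc_nonneg
  have hg : ∀ k, |a k| * ‖β k‖ ^ k = Real.sqrt (b k) * c k := by
    intro k
    by_cases h : a k = 0
    · simp [hcdef, h]
    · have hbk : 0 < Real.sqrt (b k) := Real.sqrt_pos.2 (hab k h)
      rw [hcdef]
      field_simp
  have hgsum : Summable (fun k => Real.sqrt (b k) * c k) := by
    refine Summable.of_nonneg_of_le (fun k => by positivity) (fun k => ?_)
      (hS.add (hb_sum.mul_right (∑' k, c k)))
    have h1 : Real.sqrt (b k) ≤ 1 + b k := by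
      nlinarith [Real.sq_sqrt (hb_nonneg k), Real.sqrt_nonneg (b k)]
    have h2 : c k ≤ ∑' j, c j := Summable.le_tsum hS k (fun j _ => hc_nonneg j)
    have h3 := hc_nonneg k
    have h4 := hb_nonneg k
    nlinarith
  have hinner_le : ∀ (u : EuclideanSpace ℝ (Fin d)) (e : Fin n), |⟪u, x e⟫| ≤ ‖u‖ := by
    intro u e
    have := abs_real_inner_le_norm u (x e)
    rwa [hx e, mul_one] at this
  have habsy : ∀ (e : Fin n) (k : ℕ), |a k * ⟪β k, x e⟫ ^ k| ≤ Real.sqrt (b k) * c k := by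
    intro e k
    calc |a k * ⟪β k, x e⟫ ^ k| = |a k| * |⟪β k, x e⟫| ^ k := by rw [abs_mul, abs_pow]
      _ ≤ |a k| * ‖β k‖ ^ k := by
          gcongr
          exact hinner_le _ e
      _ = Real.sqrt (b k) * c k := hg k
  have hysum : ∀ e, Summable (fun k => a k * ⟪β k, x e⟫ ^ k) := by
    intro e
    exact Summable.of_abs
      (Summable.of_nonneg_of_le (fun k => abs_nonneg _) (fun k => habsy e k) hgsum)
  set v : Fin n → ℝ := H⁻¹ *ᵥ y with hv
  set E : ℕ → ℝ := fun k => ∑ e, v e * ⟪β k, x e⟫ ^ k with hE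
  set P : ℕ → ℝ := fun k => ∑ e, ∑ f, v e * v f * ⟪x e, x f⟫ ^ k with hP
  have hkey := fun k => key_cs n d k x (β k) v
  have hPnn : ∀ k, 0 ≤ P k := fun k => (hkey k).2
  have hvy : v ⬝ᵥ y = ∑' k, a k * E k := by
    rw [dotProduct]
    calc ∑ e, v e * y e = ∑ e, ∑' k, v e * (a k * ⟪β k, x e⟫ ^ k) := by
          refine Finset.sum_congr rfl fun e _ => ?_
          rw [hy e, ← tsum_mul_left]
      _ = ∑' k, ∑ e, v e * (a k * ⟪β k, x e⟫ ^ k) :=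
          (Summable.tsum_finsetSum (fun e _ => ((hysum e).mul_left (v e)))).symm
      _ = ∑' k, a k * E k := by
          refine tsum_congr fun k => ?_
          rw [hE]
          simp only
          rw [Finset.mul_sum]
          exact Finset.sum_congr rfl fun e _ => by ring
  have hbsumk : ∀ e f : Fin n, Summable (fun k => v e * v f * (b k * ⟪x e, x f⟫ ^ k)) := by
    intro e f
    apply Summable.mul_left
    refine Summable.of_abs (Summable.of_nonneg_of_le (fun k => abs_nonneg _) (fun k => ?_) hb_sum)
    rw [abs_mul, abs_pow]
    calc |b k| * |⟪x e, x f⟫| ^ k ≤ |b k| * 1 ^ k := by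
          gcongr
          exact (hinner_le (x e) f).trans_eq (hx e)
      _ = b k := by rw [one_pow, mul_one, abs_of_nonneg (hb_nonneg k)]
  have hbP_eq : ∀ k, b k * P k = ∑ e, ∑ f, v e * v f * (b k * ⟪x e, x f⟫ ^ k) := by
    intro k
    rw [hP]
    simp only
    rw [Finset.mul_sum]
    refine Finset.sum_congr rfl fun e _ => ?_
    rw [Finset.mul_sum]
    exact Finset.sum_congr rfl fun f _ => by ring
  have hWsum : Summable (fun k => b k * P k) := by
    have : (fun k => b k * P k) = fun k => ∑ e, ∑ f, v e * v f * (b k * ⟪x e, x f⟫ ^ k) :=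
      funext hbP_eq
    rw [this]
    exact summable_sum (fun e _ => summable_sum (fun f _ => hbsumk e f))
  have hHvv : v ⬝ᵥ (H *ᵥ v) = ∑' k, b k * P k := by
    calc v ⬝ᵥ (H *ᵥ v) = ∑ e, ∑ f, v e * v f * H e f := by
          simp only [dotProduct, mulVec, Finset.mul_sum]
          exact Finset.sum_congr rfl fun e _ => Finset.sum_congr rfl fun f _ => by ring
      _ = ∑ e, ∑ f, ∑' k, v e * v f * (b k * ⟪x e, x f⟫ ^ k) := by
          refine Finset.sum_congr rfl fun e _ => Finset.sum_congr rfl fun f _ => ?_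
          rw [hH e f, ← tsum_mul_left]
      _ = ∑ e, ∑' k, ∑ f, v e * v f * (b k * ⟪x e, x f⟫ ^ k) :=
          Finset.sum_congr rfl fun e _ => (Summable.tsum_finsetSum (fun f _ => hbsumk e f)).symm
      _ = ∑' k, ∑ e, ∑ f, v e * v f * (b k * ⟪x e, x f⟫ ^ k) :=
          (Summable.tsum_finsetSum (fun e _ => summable_sum (fun f _ => hbsumk e f))).symm
      _ = ∑' k, b k * P k := tsum_congr fun k => (hbP_eq k).symm
  set W : ℝ := ∑' k, b k * P k with hW
  have hWnn : 0 ≤ W := tsum_nonneg (fun k => mul_nonneg (hb_nonneg k) (hPnn k))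
  have hbP_le : ∀ k, b k * P k ≤ W :=
    fun k => Summable.le_tsum hWsum k (fun j _ => mul_nonneg (hb_nonneg j) (hPnn j))
  have hEk : ∀ k, |E k| ≤ ‖β k‖ ^ k * Real.sqrt (P k) := by
    intro k
    have hsq : E k ^ 2 ≤ (‖β k‖ ^ k * Real.sqrt (P k)) ^ 2 := by
      rw [mul_pow, Real.sq_sqrt (hPnn k)]
      exact (hkey k).1
    calc |E k| = Real.sqrt (E k ^ 2) := (Real.sqrt_sq_eq_abs _).symm
      _ ≤ Real.sqrt ((‖β k‖ ^ k * Real.sqrt (P k)) ^ 2) := Real.sqrt_le_sqrt hsq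
      _ = ‖β k‖ ^ k * Real.sqrt (P k) := Real.sqrt_sq (by positivity)
  have habs : ∀ k, |a k * E k| ≤ c k * Real.sqrt W := by
    intro k
    calc |a k * E k| = |a k| * |E k| := abs_mul _ _
      _ ≤ |a k| * (‖β k‖ ^ k * Real.sqrt (P k)) := by
          gcongr
          exact hEk k
      _ = (|a k| * ‖β k‖ ^ k) * Real.sqrt (P k) := by ring
      _ = (Real.sqrt (b k) * c k) * Real.sqrt (P k) := by rw [hg k]
      _ = c k * (Real.sqrt (b k) * Real.sqrt (P k)) := by ring
      _ = c k * Real.sqrt (b k * P k) := by rw [Real.sqrt_mul (hb_nonneg k)]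
      _ ≤ c k * Real.sqrt W := by
          gcongr
          exact hbP_le k
  have haEsum : Summable (fun k => a k * E k) :=
    Summable.of_abs (Summable.of_nonneg_of_le (fun k => abs_nonneg _) habs
      (hS.mul_right (Real.sqrt W)))
  have hmain : v ⬝ᵥ y ≤ (∑' k, c k) * Real.sqrt W := by
    rw [hvy, ← tsum_mul_right]
    exact Summable.tsum_le_tsum (fun k => (le_abs_self _).trans (habs k)) haEsum
      (hS.mul_right (Real.sqrt W))
  have hdet : IsUnit H.det := isUnit_iff_ne_zero.2 (ne_of_gt hHpd.det_pos)
  have hHv : H *ᵥ v = y := by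
    rw [hv, Matrix.mulVec_mulVec, Matrix.mul_nonsing_inv _ hdet, Matrix.one_mulVec]
  have hQW : y ⬝ᵥ v = W := by
    calc y ⬝ᵥ v = v ⬝ᵥ y := dotProduct_comm _ _
      _ = v ⬝ᵥ (H *ᵥ v) := by rw [hHv]
      _ = W := hHvv
  have hvyW : v ⬝ᵥ y = W := (dotProduct_comm _ _).trans hQW
  have hmain' : W ≤ (∑' k, c k) * Real.sqrt W :=
    calc W = v ⬝ᵥ y := hvyW.symm
      _ ≤ (∑' k, c k) * Real.sqrt W := hmain
  rw [hQW]
  rcases eq_or_lt_of_le (Real.sqrt_nonneg W) with h0 | h0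
  · rw [← h0]; exact hS0
  · have hw : Real.sqrt W * Real.sqrt W ≤ (∑' k, c k) * Real.sqrt W := by
      rw [Real.mul_self_sqrt hWnn]; exact hmain'
    exact le_of_mul_le_mul_right hw h0
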